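/- Let X be a compact metric space and Q : X → (0,∞) log-Hölder continuous. For an open ball B set Q⁻(B) := inf_{x∈B} Q(x) and Q⁺(B) := sup_{x∈B} Q(x), and let Q̃ be any function from open balls to [0,∞) with Q⁻(B) ≤ Q̃(B) ≤ Q⁺(B) for all open balls B. For σ ∈ {Q⁺, Q⁻, Q̃} define the Borel measure λ^σ(A) := sup_{δ>0} inf{ Σ_i diam(B_i)^{σ(B_i)} : (B_i)_i an at most countable cover of A by open balls with diam(B_i) ≤ δ }. Then λ^{Q⁺}, λ^{Q⁻}, λ^{Q̃} are pairwise strongly equivalent. -/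

import Mathlib

/- STATEMENT 8: Let X be a compact metric space and Q : X → (0,∞) log-Hölder continuous.
   For an open ball B set Q⁻(B) := inf_{x∈B} Q x and Q⁺(B) := sup_{x∈B} Q x, and let Q̃
   be any [0,∞)-valued function of open balls with Q⁻(B) ≤ Q̃(B) ≤ Q⁺(B). For
   σ ∈ {Q⁺, Q⁻, Q̃} let λ^σ be the Carathéodory-construction Borel measure from covers
   by open balls B with weight diam(B)^{σ(B)}. Then λ^{Q⁺}, λ^{Q⁻}, λ^{Q̃} are pairwise
   strongly equivalent. -/

open MeasureTheory Metric
open scoped ENNReal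

/-- Strong equivalence of Borel measures: `ν E / C ≤ μ E ≤ C · ν E` for all Borel `E`. -/
def StrongEquiv {X : Type*} [MeasurableSpace X] (μ ν : Measure X) : Prop :=
  ∃ C : ℝ≥0∞, 0 < C ∧ C ≠ ⊤ ∧
    ∀ E : Set X, MeasurableSet E → ν E / C ≤ μ E ∧ μ E ≤ C * ν E

/-- `Q` is log-Hölder continuous: `|Q x − Q y| ≤ −C / log (d(x,y))` whenever
`0 < d(x,y) < 1/2`. -/
def LogHolder {X : Type*} [MetricSpace X] (Q : X → ℝ) : Prop :=
  ∃ C : ℝ, 0 < C ∧ ∀ x y : X, 0 < dist x y → dist x y < 1 / 2 →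
    |Q x - Q y| ≤ C / (-Real.log (dist x y))

/-- The Carathéodory-construction measure from covers by open balls, the ball
`B = B_ρ(x)` receiving weight `diam(B)^{σ x ρ}` (exponent a function of the ball,
given via a designated representation; non-balls are disallowed). -/
noncomputable def lambdaExp {X : Type*} [MetricSpace X] [MeasurableSpace X] [BorelSpace X]
    (σ : X → ℝ → ℝ) : Measure X :=
  Measure.mkMetric' (fun U =>
    ⨅ (x : X) (ρ : ℝ) (_ : U = Metric.ball x ρ), EMetric.diam U ^ σ x ρ)

/-- Key `ℝ≥0∞` computation: if `b - a ≤ 2C / (-log d)` and `0 < d ≤ 1/4`, then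
`d ^ a ≤ e^{2C} · d ^ b`. -/
lemma statement8.core {C : ℝ} (hC : 0 < C) (D : ℝ≥0∞) (hD0 : D ≠ 0) (hD : D ≤ 1/4) (a b : ℝ)
    (h : b - a ≤ 2*C / (-Real.log D.toReal)) :
    D ^ a ≤ ENNReal.ofReal (Real.exp (2*C)) * D ^ b := by
  have hDt : D ≠ ⊤ := ne_top_of_le_ne_top (by norm_num) hD
  have hd0 : 0 < D.toReal := ENNReal.toReal_pos hD0 hDt
  have hd4 : D.toReal ≤ 1/4 := by
    have := ENNReal.toReal_mono (by norm_num) hD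
    simpa using this
  have hd1 : D.toReal < 1 := by linarith
  have hlog : Real.log D.toReal < 0 := Real.log_neg hd0 hd1
  have h1 : D ^ a = D ^ b * D ^ (a - b) := by
    rw [← ENNReal.rpow_add _ _ hD0 hDt]; ring_nf
  rw [h1, mul_comm]
  refine mul_le_mul_left ?_ _
  have h2 : D ^ (a - b) ≤ D ^ (-(2*C / (-Real.log D.toReal))) := by
    refine ENNReal.rpow_le_rpow_of_exponent_ge ?_ (by linarith)
    calc D ≤ 1/4 := hD
    _ ≤ 1 := by norm_num
  refine h2.trans_eq ?_
  rw [← ENNReal.ofReal_toReal hDt, ENNReal.ofReal_rpow_of_pos hd0,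
    Real.rpow_def_of_pos hd0]
  congr 1
  have : Real.log D.toReal ≠ 0 := ne_of_lt hlog
  rw [ENNReal.toReal_ofReal hd0.le]
  field_simp

/-- On a nonempty set of small positive diameter, the oscillation of a log-Hölder
function `Q` is at most `2C / (-log diam)`, and the image of `Q` is bounded. -/
lemma statement8.gap {X : Type*} [MetricSpace X] {Q : X → ℝ} {C : ℝ} (hC : 0 < C)
    (hQ : ∀ x y : X, 0 < dist x y → dist x y < 1/2 → |Q x - Q y| ≤ C / (-Real.log (dist x y)))
    {s : Set X} (hne : s.Nonempty) (hd0 : EMetric.diam s ≠ 0) (hd : EMetric.diam s ≤ 1/4) :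
    BddAbove (Q '' s) ∧ BddBelow (Q '' s) ∧
      sSup (Q '' s) - sInf (Q '' s) ≤ 2*C / (-Real.log (EMetric.diam s).toReal) := by
  set d := (EMetric.diam s).toReal with hdd
  have hDt : EMetric.diam s ≠ ⊤ := ne_top_of_le_ne_top (by norm_num) hd
  have hd0' : 0 < d := ENNReal.toReal_pos hd0 hDt
  have hd4 : d ≤ 1/4 := by
    have := ENNReal.toReal_mono (by norm_num) hd
    simpa using this
  have hlog : Real.log d < 0 := Real.log_neg hd0' (by linarith)
  set M := C / (-Real.log d) with hM
  have hM0 : 0 ≤ M := div_nonneg hC.le (by linarith)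
  have pair : ∀ a ∈ s, ∀ b ∈ s, |Q a - Q b| ≤ M := by
    intro a ha b hb
    have hab : dist a b ≤ d := by
      have := EMetric.edist_le_diam_of_mem ha hb
      have h2 := ENNReal.toReal_mono hDt this
      simpa [dist_edist] using h2
    rcases eq_or_lt_of_le (dist_nonneg (x := a) (y := b)) with h0 | h0
    · have hab' : a = b := dist_eq_zero.1 h0.symm
      simp [hab', hM0]
    · refine (hQ a b h0 (by linarith)).trans ?_
      rw [hM]
      apply div_le_div_of_nonneg_left hC.le (by linarith)
      have := Real.log_le_log h0 hab
      linarith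
  obtain ⟨b₀, hb₀⟩ := id hne
  have hub : ∀ q ∈ Q '' s, q ≤ Q b₀ + M := by
    rintro q ⟨a, ha, rfl⟩
    have := (abs_le.1 (pair a ha b₀ hb₀)).2; linarith
  have hlb : ∀ q ∈ Q '' s, Q b₀ - M ≤ q := by
    rintro q ⟨a, ha, rfl⟩
    have := (abs_le.1 (pair a ha b₀ hb₀)).1; linarith
  have hba : BddAbove (Q '' s) := ⟨Q b₀ + M, hub⟩
  have hbb : BddBelow (Q '' s) := ⟨Q b₀ - M, hlb⟩
  refine ⟨hba, hbb, ?_⟩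
  have h1 : sSup (Q '' s) ≤ Q b₀ + M := csSup_le (Set.Nonempty.image Q hne) hub
  have h2 : Q b₀ - M ≤ sInf (Q '' s) := le_csInf (Set.Nonempty.image Q hne) hlb
  have : 2*C / (-Real.log d) = 2*M := by rw [hM]; ring
  rw [this]; linarith

/-- If `m₁ ≤ c · m₂` on nonempty sets of diameter at most `ε`, then the corresponding
Carathéodory-construction outer measures satisfy `mkMetric' m₁ ≤ c • mkMetric' m₂`. -/
lemma statement8.outer_le {X : Type*} [MetricSpace X] (m₁ m₂ : Set X → ℝ≥0∞) {c : ℝ≥0∞}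
    (hc0 : c ≠ 0) (hct : c ≠ ⊤) {ε : ℝ≥0∞} (hε : 0 < ε)
    (h : ∀ s : Set X, s.Nonempty → EMetric.diam s ≤ ε → m₁ s ≤ c * m₂ s) :
    OuterMeasure.mkMetric' m₁ ≤ c • OuterMeasure.mkMetric' m₂ := by
  refine iSup₂_le fun r hr => ?_
  set r' := min r ε with hr'
  have hr'0 : 0 < r' := lt_min hr hε
  refine le_trans (OuterMeasure.mkMetric'.mono_pre m₁ (min_le_left r ε)) ?_
  have step : OuterMeasure.mkMetric'.pre m₁ r' ≤ c • OuterMeasure.mkMetric'.pre m₂ r' := by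
    rw [OuterMeasure.mkMetric'.pre, OuterMeasure.mkMetric'.pre, OuterMeasure.smul_boundedBy hct]
    refine OuterMeasure.le_boundedBy'.2 fun s hs => ?_
    refine le_trans (OuterMeasure.boundedBy_le s) ?_
    simp only [Pi.smul_apply, smul_eq_mul, extend, iInf_eq_if]
    split_ifs with hds
    · exact h s hs (hds.trans (min_le_right r ε))
    · simp [ENNReal.mul_top hc0]
  refine step.trans ?_
  have hle : OuterMeasure.mkMetric'.pre m₂ r' ≤ OuterMeasure.mkMetric' m₂ :=
    le_iSup₂_of_le r' hr'0 le_rfl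
  intro s
  simp only [OuterMeasure.smul_apply, smul_eq_mul]
  exact mul_le_mul_right (hle s) c

/-- Measure-level version of `statement8.outer_le`. -/
lemma statement8.meas_le {X : Type*} [MetricSpace X] [MeasurableSpace X] [BorelSpace X]
    (m₁ m₂ : Set X → ℝ≥0∞) {c : ℝ≥0∞} (hc0 : c ≠ 0) (hct : c ≠ ⊤) {ε : ℝ≥0∞} (hε : 0 < ε)
    (h : ∀ s : Set X, s.Nonempty → EMetric.diam s ≤ ε → m₁ s ≤ c * m₂ s)
    {E : Set X} (hE : MeasurableSet E) :
    Measure.mkMetric' m₁ E ≤ c * Measure.mkMetric' m₂ E := by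
  have e1 : Measure.mkMetric' m₁ E = OuterMeasure.mkMetric' m₁ E := toMeasure_apply _ _ hE
  have e2 : Measure.mkMetric' m₂ E = OuterMeasure.mkMetric' m₂ E := toMeasure_apply _ _ hE
  rw [e1, e2]
  have := statement8.outer_le m₁ m₂ hc0 hct hε h E
  simpa using this

/-- `σ` lies between the inf and sup of `Q` over small nonempty balls. -/
def SmallOK {X : Type*} [MetricSpace X] (Q : X → ℝ) (σ : X → ℝ → ℝ) : Prop :=
  ∀ x ρ, (Metric.ball x ρ).Nonempty → EMetric.diam (Metric.ball x ρ) ≤ 1/4 →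
    sInf (Q '' Metric.ball x ρ) ≤ σ x ρ ∧ σ x ρ ≤ sSup (Q '' Metric.ball x ρ)

/-- Comparison of the two ball gauges on small nonempty sets. -/
lemma statement8.gauge_le {X : Type*} [MetricSpace X] {Q : X → ℝ} {C : ℝ} (hC : 0 < C)
    (hQ : ∀ x y : X, 0 < dist x y → dist x y < 1/2 → |Q x - Q y| ≤ C / (-Real.log (dist x y)))
    {σ₁ σ₂ : X → ℝ → ℝ} (h₁ : SmallOK Q σ₁) (h₂ : SmallOK Q σ₂)
    (s : Set X) (hne : s.Nonempty) (hd : EMetric.diam s ≤ 1/4) :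
    (⨅ (x : X) (ρ : ℝ) (_ : s = Metric.ball x ρ), EMetric.diam s ^ σ₁ x ρ) ≤
      ENNReal.ofReal (Real.exp (2*C)) *
        ⨅ (x : X) (ρ : ℝ) (_ : s = Metric.ball x ρ), EMetric.diam s ^ σ₂ x ρ := by
  set c := ENNReal.ofReal (Real.exp (2*C)) with hc
  have hc0 : c ≠ 0 := (ENNReal.ofReal_pos.2 (Real.exp_pos _)).ne'
  have hct : c ≠ ⊤ := ENNReal.ofReal_ne_top
  have hc1 : 1 ≤ c := ENNReal.one_le_ofReal.2 (Real.one_le_exp (by linarith))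
  rw [ENNReal.mul_iInf_of_ne hc0 hct]
  refine le_iInf fun x => ?_
  rw [ENNReal.mul_iInf_of_ne hc0 hct]
  refine le_iInf fun ρ => ?_
  rw [ENNReal.mul_iInf_of_ne hc0 hct]
  refine le_iInf fun hball => ?_
  refine le_trans (iInf_le_of_le x (iInf_le_of_le ρ (iInf_le _ hball))) ?_
  have hne' : (Metric.ball x ρ).Nonempty := hball ▸ hne
  have hd' : EMetric.diam (Metric.ball x ρ) ≤ 1/4 := hball ▸ hd
  have h₁' := h₁ x ρ hne' hd'
  have h₂' := h₂ x ρ hne' hd'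
  rw [← hball] at h₁' h₂'
  by_cases hD0 : EMetric.diam s = 0
  · obtain ⟨y, hy⟩ := id hne
    have hsing : s = {y} := (EMetric.diam_eq_zero_iff.1 hD0).eq_singleton_of_mem hy
    rw [hsing, Set.image_singleton] at h₁' h₂'
    simp only [csSup_singleton, csInf_singleton] at h₁' h₂'
    have he : σ₁ x ρ = σ₂ x ρ := by
      have e1 : σ₁ x ρ = Q y := le_antisymm h₁'.2 h₁'.1
      have e2 : σ₂ x ρ = Q y := le_antisymm h₂'.2 h₂'.1
      rw [e1, e2]
    rw [he]
    exact le_mul_of_one_le_left zero_le hc1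
  · obtain ⟨hba, hbb, hgap⟩ := statement8.gap hC hQ hne hD0 hd
    exact statement8.core hC _ hD0 hd _ _ (by linarith [h₁'.1, h₂'.2])

/-- Main combinator: any two admissible exponent functions give strongly
equivalent measures. -/
lemma statement8.equiv_main {X : Type*} [MetricSpace X] [MeasurableSpace X] [BorelSpace X]
    {Q : X → ℝ} (hQ : LogHolder Q) {σ₁ σ₂ : X → ℝ → ℝ}
    (h₁ : SmallOK Q σ₁) (h₂ : SmallOK Q σ₂) :
    StrongEquiv (lambdaExp σ₁) (lambdaExp σ₂) := by
  obtain ⟨C, hC, hQb⟩ := hQ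
  set c := ENNReal.ofReal (Real.exp (2*C)) with hc
  have hc0 : c ≠ 0 := (ENNReal.ofReal_pos.2 (Real.exp_pos _)).ne'
  have hct : c ≠ ⊤ := ENNReal.ofReal_ne_top
  have key12 : ∀ E : Set X, MeasurableSet E → lambdaExp σ₁ E ≤ c * lambdaExp σ₂ E := by
    intro E hE
    simp only [lambdaExp]
    exact statement8.meas_le _ _ hc0 hct (by norm_num : (0:ℝ≥0∞) < 1/4)
      (fun s hs hd => statement8.gauge_le hC hQb h₁ h₂ s hs hd) hE
  have key21 : ∀ E : Set X, MeasurableSet E → lambdaExp σ₂ E ≤ c * lambdaExp σ₁ E := by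
    intro E hE
    simp only [lambdaExp]
    exact statement8.meas_le _ _ hc0 hct (by norm_num : (0:ℝ≥0∞) < 1/4)
      (fun s hs hd => statement8.gauge_le hC hQb h₂ h₁ s hs hd) hE
  refine ⟨c, pos_iff_ne_zero.2 hc0, hct, fun E hE => ⟨?_, key12 E hE⟩⟩
  rw [ENNReal.div_le_iff_le_mul (Or.inl hc0) (Or.inl hct)]
  rw [mul_comm]
  exact key21 E hE

theorem statement8 {X : Type*} [MetricSpace X] [CompactSpace X]
    [MeasurableSpace X] [BorelSpace X]
    (Q : X → ℝ) (hQpos : ∀ x, 0 < Q x) (hQ : LogHolder Q)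
    (Qt : X → ℝ → ℝ) (hQt0 : ∀ x ρ, 0 ≤ Qt x ρ)
    (hQt : ∀ (x : X) (ρ : ℝ), (Metric.ball x ρ).Nonempty →
      sInf (Q '' Metric.ball x ρ) ≤ Qt x ρ ∧ Qt x ρ ≤ sSup (Q '' Metric.ball x ρ)) :
    StrongEquiv (lambdaExp (fun x ρ => sSup (Q '' Metric.ball x ρ)))
        (lambdaExp (fun x ρ => sInf (Q '' Metric.ball x ρ)) : Measure X) ∧
    StrongEquiv (lambdaExp (fun x ρ => sSup (Q '' Metric.ball x ρ))) (lambdaExp Qt : Measure X) ∧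
    StrongEquiv (lambdaExp (fun x ρ => sInf (Q '' Metric.ball x ρ))) (lambdaExp Qt : Measure X) := by
  obtain ⟨C, hC, hQb⟩ := id hQ
  have base : ∀ x ρ, (Metric.ball x ρ).Nonempty → EMetric.diam (Metric.ball x ρ) ≤ 1/4 →
      sInf (Q '' Metric.ball x ρ) ≤ sSup (Q '' Metric.ball x ρ) := by
    intro x ρ hne hd
    by_cases hD0 : EMetric.diam (Metric.ball x ρ) = 0
    · obtain ⟨y, hy⟩ := id hne
      have hsing : Metric.ball x ρ = {y} :=
        (EMetric.diam_eq_zero_iff.1 hD0).eq_singleton_of_mem hy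
      rw [hsing, Set.image_singleton, csSup_singleton, csInf_singleton]
    · obtain ⟨hba, hbb, _⟩ := statement8.gap hC hQb hne hD0 hd
      exact csInf_le_csSup (Set.Nonempty.image Q hne) hbb hba
  have hsup : SmallOK Q (fun x ρ => sSup (Q '' Metric.ball x ρ)) :=
    fun x ρ hne hd => ⟨base x ρ hne hd, le_rfl⟩
  have hinf : SmallOK Q (fun x ρ => sInf (Q '' Metric.ball x ρ)) :=
    fun x ρ hne hd => ⟨le_rfl, base x ρ hne hd⟩
  have hqt : SmallOK Q Qt := fun x ρ hne _ => hQt x ρ hne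
  exact ⟨statement8.equiv_main hQ hsup hinf, statement8.equiv_main hQ hsup hqt,
    statement8.equiv_main hQ hinf hqt⟩
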